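/- arXiv:2205.06225 — 5 statements merged into one kernel-verified Lean document; each statement's English description precedes it below -/
import Mathlib

section
/- Let N ∈ ℂ^{n×n} be Hermitian positive definite and A ∈ ℂ^{n×p}, B ∈ ℂ^{p×l}. With E(Γ) = (I - Γᴴ A B)(I - Γᴴ A B)ᴴ + Γᴴ N Γ, the choice Γ̂ = (N + A B Bᴴ Aᴴ)⁻¹ A B minimizes E(Γ) in the Loewner order: E(Γ̂) ⪯ E(Γ) for all Γ ∈ ℂ^{n×l}. -/
open Matrix
open scoped ComplexOrder

theorem mmse_receiver_loewner_optimal (n p l : ℕ)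
    (N : Matrix (Fin n) (Fin n) ℂ) (A : Matrix (Fin n) (Fin p) ℂ)
    (B : Matrix (Fin p) (Fin l) ℂ) (hN : N.PosDef)
    (E : Matrix (Fin n) (Fin l) ℂ → Matrix (Fin l) (Fin l) ℂ)
    (hE : ∀ Γ, E Γ = ((1 : Matrix (Fin l) (Fin l) ℂ) - Γᴴ * A * B) *
        ((1 : Matrix (Fin l) (Fin l) ℂ) - Γᴴ * A * B)ᴴ + Γᴴ * N * Γ)
    (Γhat : Matrix (Fin n) (Fin l) ℂ)
    (hΓhat : Γhat = (N + A * B * Bᴴ * Aᴴ)⁻¹ * A * B) :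
    ∀ Γ : Matrix (Fin n) (Fin l) ℂ, (E Γ - E Γhat).PosSemidef := by
  intro Γ
  set M : Matrix (Fin n) (Fin n) ℂ := N + A * B * Bᴴ * Aᴴ with hMdef
  have hABps : (A * B * Bᴴ * Aᴴ).PosSemidef := by
    have := Matrix.posSemidef_self_mul_conjTranspose (A * B)
    simpa [Matrix.conjTranspose_mul, Matrix.mul_assoc] using this
  have hM : M.PosDef := hN.add_posSemidef hABps
  have hMherm : Mᴴ = M := hM.isHermitian.eq
  have hMinv : M * M⁻¹ = 1 := Matrix.mul_nonsing_inv M hM.det_pos.ne'.isUnit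
  have h1 : M * Γhat = A * B := by
    rw [hΓhat, ← Matrix.mul_assoc, ← Matrix.mul_assoc, hMinv, Matrix.one_mul]
  have h2 : Γhatᴴ * M = Bᴴ * Aᴴ := by
    have := congrArg Matrix.conjTranspose h1
    simpa [Matrix.conjTranspose_mul, hMherm, Matrix.mul_assoc] using this
  have key : E Γ - E Γhat = (Γ - Γhat)ᴴ * M * (Γ - Γhat) := by
    have expand : ∀ X : Matrix (Fin n) (Fin l) ℂ,
        E X = 1 - Xᴴ * (A * B) - (A * B)ᴴ * X + Xᴴ * M * X := by
      intro X
      rw [hE X, hMdef]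
      simp only [Matrix.conjTranspose_sub, Matrix.conjTranspose_mul,
        Matrix.conjTranspose_one, Matrix.conjTranspose_conjTranspose,
        Matrix.sub_mul, Matrix.mul_sub, Matrix.mul_one, Matrix.one_mul,
        Matrix.mul_add, Matrix.add_mul, Matrix.mul_assoc]
      abel
    rw [expand Γ, expand Γhat]
    have h3 : Γhatᴴ * M * Γhat = Γhatᴴ * (A * B) := by
      rw [Matrix.mul_assoc, h1]
    have h4 : Γhatᴴ * M * Γ = (A * B)ᴴ * Γ := by
      rw [h2]; simp [Matrix.conjTranspose_mul, Matrix.mul_assoc]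
    have h5 : Γᴴ * M * Γhat = Γᴴ * (A * B) := by
      rw [Matrix.mul_assoc, h1]
    have h6 : Γhatᴴ * (A * B) = (A * B)ᴴ * Γhat := by
      have h7 := congrArg Matrix.conjTranspose h3
      simp only [Matrix.conjTranspose_mul, Matrix.conjTranspose_conjTranspose,
        hMherm] at h7
      calc Γhatᴴ * (A * B) = Γhatᴴ * M * Γhat := h3.symm
        _ = (Γhatᴴ * M * Γhat)ᴴ := by
              rw [Matrix.conjTranspose_mul, Matrix.conjTranspose_mul, hMherm,
                Matrix.conjTranspose_conjTranspose, Matrix.mul_assoc]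
        _ = (A * B)ᴴ * Γhat := by
              rw [h3, Matrix.conjTranspose_mul, Matrix.conjTranspose_conjTranspose]
    simp only [Matrix.conjTranspose_sub, Matrix.sub_mul, Matrix.mul_sub,
      h3, h4, h5, h6]
    abel
  rw [key]
  exact hM.posSemidef.conjTranspose_mul_mul_same _
end

section
/- Let N ∈ ℂ^{n×n} be Hermitian positive definite, A ∈ ℂ^{n×p}, B ∈ ℂ^{p×l}, and Γ̂ = (N + A B Bᴴ Aᴴ)⁻¹ A B. Then E(Γ̂) = I - Γ̂ᴴ A B, where E(Γ) = (I - Γᴴ A B)(I - Γᴴ A B)ᴴ + Γᴴ N Γ. -/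
open Matrix
open scoped ComplexOrder

theorem mse_at_mmse_receiver (n p l : ℕ)
    (N : Matrix (Fin n) (Fin n) ℂ) (A : Matrix (Fin n) (Fin p) ℂ)
    (B : Matrix (Fin p) (Fin l) ℂ) (hN : N.PosDef)
    (Γhat : Matrix (Fin n) (Fin l) ℂ)
    (hΓhat : Γhat = (N + A * B * Bᴴ * Aᴴ)⁻¹ * A * B) :
    ((1 : Matrix (Fin l) (Fin l) ℂ) - Γhatᴴ * A * B) *
        ((1 : Matrix (Fin l) (Fin l) ℂ) - Γhatᴴ * A * B)ᴴ + Γhatᴴ * N * Γhat =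
      (1 : Matrix (Fin l) (Fin l) ℂ) - Γhatᴴ * A * B := by
  set M : Matrix (Fin n) (Fin n) ℂ := N + A * B * Bᴴ * Aᴴ with hMdef
  have hM : M.PosDef := by
    have h : (A * B * Bᴴ * Aᴴ) = (A * B) * (A * B)ᴴ := by
      rw [conjTranspose_mul, Matrix.mul_assoc]
    rw [hMdef, h]
    exact hN.add_posSemidef (posSemidef_self_mul_conjTranspose (A * B))
  have hMH : Mᴴ = M := hM.isHermitian
  have hMu : IsUnit M.det := (isUnit_iff_isUnit_det _).1 hM.isUnit
  have hMinv : M * M⁻¹ = 1 := mul_nonsing_inv M hMu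
  have hMG : M * Γhat = A * B := by
    rw [hΓhat, ← Matrix.mul_assoc, ← Matrix.mul_assoc, hMinv, Matrix.one_mul]
  -- Γhatᴴ * A * B = Γhatᴴ * M * Γhat
  have h1 : Γhatᴴ * (A * B) = Γhatᴴ * M * Γhat := by
    rw [← hMG, Matrix.mul_assoc]
  have h2 : (Γhatᴴ * (A * B))ᴴ = Γhatᴴ * (A * B) := by
    rw [h1]
    calc (Γhatᴴ * M * Γhat)ᴴ = Γhatᴴ * Mᴴ * Γhat := by
          simp [Matrix.mul_assoc, conjTranspose_mul]
      _ = Γhatᴴ * M * Γhat := by rw [hMH]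
  have hNdef : N = M - A * B * Bᴴ * Aᴴ := by rw [hMdef]; abel
  have key : Γhatᴴ * M * Γhat = Γhatᴴ * (A * B) := h1.symm
  rw [hNdef]
  have expand : Γhatᴴ * (M - A * B * Bᴴ * Aᴴ) * Γhat
      = Γhatᴴ * (A * B) - Γhatᴴ * (A * B) * ((A * B)ᴴ * Γhat) := by
    rw [Matrix.mul_sub, Matrix.sub_mul, key]
    congr 1
    rw [conjTranspose_mul]
    simp [Matrix.mul_assoc]
  have hABH : (A * B)ᴴ * Γhat = (Γhatᴴ * (A * B))ᴴ := by
    simp [conjTranspose_mul, Matrix.mul_assoc]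
  rw [expand, hABH, h2]
  have h3 : ((1 : Matrix (Fin l) (Fin l) ℂ) - Γhatᴴ * A * B)ᴴ
      = 1 - Γhatᴴ * (A * B) := by
    rw [conjTranspose_sub, conjTranspose_one, Matrix.mul_assoc, h2]
  rw [h3, Matrix.mul_assoc]
  set X := Γhatᴴ * (A * B)
  noncomm_ring
end

section
/- (Principle behind WMMSE) Let N ∈ ℂ^{n×n} be Hermitian positive definite, A ∈ ℂ^{n×p}, B ∈ ℂ^{p×l}, and E(Γ) = (I - Γᴴ A B)(I - Γᴴ A B)ᴴ + Γᴴ N Γ. Then for every Γ ∈ ℂ^{n×l} and every Hermitian positive definite Ω ∈ ℂ^{l×l}, log det(I + A B Bᴴ Aᴴ N⁻¹) ≥ log det(Ω) − Tr(Ω E(Γ)) + l, with equality attained at Γ = Γ̂ = (N + A B Bᴴ Aᴴ)⁻¹ A B and Ω = E(Γ̂)⁻¹. -/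
open Matrix
open scoped ComplexOrder

section Aux

variable {m : Type*} [Fintype m] [DecidableEq m]

open scoped MatrixOrder

private lemma wmmse_traceEig (T : Matrix m m ℂ) (hT : T.IsHermitian) :
    T.trace = ∑ i, (hT.eigenvalues i : ℂ) := by
  conv_lhs => rw [hT.spectral_theorem]
  rw [Unitary.conjStarAlgAut_apply, Matrix.trace_mul_cycle]
  simp [Matrix.trace_diagonal]

private lemma wmmse_log_det_le {T : Matrix m m ℂ} (hT : T.PosDef) :
    Real.log T.det.re ≤ T.trace.re - Fintype.card m := by
  have hdet : T.det.re = ∏ i, hT.isHermitian.eigenvalues i := by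
    rw [hT.isHermitian.det_eq_prod_eigenvalues]; norm_cast
  have htr : T.trace.re = ∑ i, hT.isHermitian.eigenvalues i := by
    rw [wmmse_traceEig T hT.isHermitian]; norm_cast
  rw [hdet, htr, Real.log_prod (fun i _ => (hT.eigenvalues_pos i).ne')]
  calc ∑ i, Real.log (hT.isHermitian.eigenvalues i)
      ≤ ∑ i, (hT.isHermitian.eigenvalues i - 1) :=
        Finset.sum_le_sum fun i _ => Real.log_le_sub_one_of_pos (hT.eigenvalues_pos i)
    _ = (∑ i, hT.isHermitian.eigenvalues i) - Fintype.card m := by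
        rw [Finset.sum_sub_distrib]; simp [Finset.card_univ]

private lemma wmmse_posdef_conj {S : Matrix m m ℂ} (hS : S.PosDef) {C : Matrix m m ℂ}
    (hC : IsUnit C) : (Cᴴ * S * C).PosDef := by
  refine Matrix.PosDef.of_dotProduct_mulVec_pos (Matrix.isHermitian_conjTranspose_mul_mul C hS.isHermitian) fun x hx => ?_
  have hinj := Matrix.mulVec_injective_iff_isUnit.mpr hC
  have hCx : C *ᵥ x ≠ 0 := fun h => hx (hinj (by simp [h]))
  simpa only [star_mulVec, dotProduct_mulVec, vecMul_vecMul] using hS.dotProduct_mulVec_pos hCx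

private lemma wmmse_sqrt_isUnit {Ω : Matrix m m ℂ} (hΩ : Ω.PosDef) :
    IsUnit (CFC.sqrt Ω) := by
  rw [Matrix.isUnit_iff_isUnit_det]
  have h : (CFC.sqrt Ω).det * (CFC.sqrt Ω).det = Ω.det := by
    rw [← Matrix.det_mul, CFC.sqrt_mul_sqrt_self Ω hΩ.posSemidef.nonneg]
  exact isUnit_iff_ne_zero.mpr fun h0 => hΩ.det_pos.ne' (by rw [← h, h0, mul_zero])

private lemma wmmse_conj_sqrt_posDef {Ω S : Matrix m m ℂ} (hΩ : Ω.PosDef) (hS : S.PosDef) :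
    (CFC.sqrt Ω * S * CFC.sqrt Ω).PosDef := by
  have h := wmmse_posdef_conj hS (wmmse_sqrt_isUnit hΩ)
  rwa [(CFC.sqrt_nonneg Ω).posSemidef.isHermitian.eq] at h

private lemma wmmse_trace_conj_sqrt {Ω : Matrix m m ℂ} (hΩ : Ω.PosDef) (S' : Matrix m m ℂ) :
    (CFC.sqrt Ω * S' * CFC.sqrt Ω).trace = (Ω * S').trace := by
  rw [Matrix.trace_mul_cycle, CFC.sqrt_mul_sqrt_self Ω hΩ.posSemidef.nonneg]

private lemma wmmse_det_conj_sqrt {Ω : Matrix m m ℂ} (hΩ : Ω.PosDef) (S' : Matrix m m ℂ) :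
    (CFC.sqrt Ω * S' * CFC.sqrt Ω).det = Ω.det * S'.det := by
  rw [Matrix.det_mul, Matrix.det_mul, mul_comm, ← mul_assoc, ← Matrix.det_mul,
    CFC.sqrt_mul_sqrt_self Ω hΩ.posSemidef.nonneg]

private lemma wmmse_det_im {Ω : Matrix m m ℂ} (hΩ : Ω.PosDef) : Ω.det.im = 0 :=
  ((Complex.lt_def.mp hΩ.det_pos).2).symm

private lemma wmmse_det_re_pos {Ω : Matrix m m ℂ} (hΩ : Ω.PosDef) : 0 < Ω.det.re := by
  have := Complex.lt_def.mp hΩ.det_pos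
  simpa using this.1

private lemma wmmse_key_ineq {Ω S : Matrix m m ℂ} (hΩ : Ω.PosDef) (hS : S.PosDef) :
    Real.log Ω.det.re + Real.log S.det.re + Fintype.card m ≤ ((Ω * S).trace).re := by
  have hT := wmmse_conj_sqrt_posDef hΩ hS
  have h1 := wmmse_log_det_le hT
  rw [wmmse_trace_conj_sqrt hΩ S, wmmse_det_conj_sqrt hΩ S] at h1
  have hre : (Ω.det * S.det).re = Ω.det.re * S.det.re := by
    rw [Complex.mul_re, wmmse_det_im hΩ, wmmse_det_im hS]; ring
  rw [hre, Real.log_mul (wmmse_det_re_pos hΩ).ne' (wmmse_det_re_pos hS).ne'] at h1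
  linarith

private lemma wmmse_trace_mul_nonneg {Ω P : Matrix m m ℂ} (hΩ : Ω.PosDef)
    (hP : P.PosSemidef) : 0 ≤ ((Ω * P).trace).re := by
  have hT : (CFC.sqrt Ω * P * CFC.sqrt Ω).PosSemidef := by
    have := hP.conjTranspose_mul_mul_same (CFC.sqrt Ω)
    rwa [(CFC.sqrt_nonneg Ω).posSemidef.isHermitian.eq] at this
  rw [← wmmse_trace_conj_sqrt hΩ P, wmmse_traceEig _ hT.isHermitian]
  rw [show (∑ i, ((hT.isHermitian.eigenvalues i : ℝ) : ℂ)).re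
      = ∑ i, hT.isHermitian.eigenvalues i by norm_cast]
  exact Finset.sum_nonneg fun i _ => hT.eigenvalues_nonneg i

end Aux

/-- Principle behind the WMMSE framework (Lemma 1). -/
theorem wmmse_principle (n p l : ℕ)
    (N : Matrix (Fin n) (Fin n) ℂ) (A : Matrix (Fin n) (Fin p) ℂ)
    (B : Matrix (Fin p) (Fin l) ℂ) (hN : N.PosDef)
    (E : Matrix (Fin n) (Fin l) ℂ → Matrix (Fin l) (Fin l) ℂ)
    (hE : ∀ Γ, E Γ = ((1 : Matrix (Fin l) (Fin l) ℂ) - Γᴴ * A * B) *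
        ((1 : Matrix (Fin l) (Fin l) ℂ) - Γᴴ * A * B)ᴴ + Γᴴ * N * Γ)
    (Γhat : Matrix (Fin n) (Fin l) ℂ)
    (hΓhat : Γhat = (N + A * B * Bᴴ * Aᴴ)⁻¹ * A * B) :
    (∀ (Γ : Matrix (Fin n) (Fin l) ℂ) (Ω : Matrix (Fin l) (Fin l) ℂ), Ω.PosDef →
      Real.log (((1 : Matrix (Fin n) (Fin n) ℂ) + A * B * Bᴴ * Aᴴ * N⁻¹).det.re) ≥
        Real.log (Ω.det.re) - ((Ω * E Γ).trace).re + (l : ℝ)) ∧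
    Real.log (((1 : Matrix (Fin n) (Fin n) ℂ) + A * B * Bᴴ * Aᴴ * N⁻¹).det.re) =
      Real.log (((E Γhat)⁻¹).det.re) - (((E Γhat)⁻¹ * E Γhat).trace).re + (l : ℝ) := by
  set C : Matrix (Fin n) (Fin l) ℂ := A * B with hC
  set M : Matrix (Fin n) (Fin n) ℂ := N + C * Cᴴ with hM
  have hCC : A * B * Bᴴ * Aᴴ = C * Cᴴ := by
    simp [hC, conjTranspose_mul, Matrix.mul_assoc]
  have hMpd : M.PosDef := hN.add_posSemidef (Matrix.posSemidef_self_mul_conjTranspose C)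
  have hMdet : IsUnit M.det := hMpd.det_pos.ne'.isUnit
  have hNdet : IsUnit N.det := hN.det_pos.ne'.isUnit
  have hΓ : Γhat = M⁻¹ * C := by rw [hΓhat, hCC, Matrix.mul_assoc]
  have hMΓ : M * Γhat = C := by
    rw [hΓ, ← Matrix.mul_assoc, Matrix.mul_nonsing_inv _ hMdet, Matrix.one_mul]
  have hΓM : Γhatᴴ * M = Cᴴ := by
    have h := congrArg conjTranspose hMΓ
    rwa [conjTranspose_mul, hMpd.isHermitian.eq] at h
  -- expansion of E
  have hEexp : ∀ Γ : Matrix (Fin n) (Fin l) ℂ,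
      E Γ = 1 - Γᴴ * C - Cᴴ * Γ + Γᴴ * M * Γ := by
    intro Γ
    rw [hE]
    simp only [hM, hC, conjTranspose_sub, conjTranspose_one, conjTranspose_mul, conjTranspose_conjTranspose,
      Matrix.sub_mul, Matrix.mul_sub, Matrix.one_mul, Matrix.mul_one,
      Matrix.add_mul, Matrix.mul_add, Matrix.mul_assoc]
    abel
  have e1 : ∀ Γ : Matrix (Fin n) (Fin l) ℂ, Γᴴ * M * Γhat = Γᴴ * C := by
    intro Γ; rw [Matrix.mul_assoc, hMΓ]
  have e2 : ∀ Γ : Matrix (Fin n) (Fin l) ℂ, Γhatᴴ * M * Γ = Cᴴ * Γ := by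
    intro Γ; rw [hΓM]
  have e4 : Γhatᴴ * C = Cᴴ * Γhat := by rw [← e1 Γhat, e2 Γhat]
  have hEhat : E Γhat = 1 - Cᴴ * Γhat := by
    rw [hEexp Γhat, e2 Γhat, e4]; abel
  have hdecomp : ∀ Γ : Matrix (Fin n) (Fin l) ℂ,
      E Γ = E Γhat + (Γ - Γhat)ᴴ * M * (Γ - Γhat) := by
    intro Γ
    rw [hEexp Γ, hEhat]
    simp only [conjTranspose_sub, Matrix.sub_mul, Matrix.mul_sub]
    rw [e1 Γ, e2 Γ, e1 Γhat, e4]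
    abel
  -- the matrix G = I + Cᴴ N⁻¹ C
  set G : Matrix (Fin l) (Fin l) ℂ := 1 + Cᴴ * N⁻¹ * C with hG
  have hGpd : G.PosDef :=
    Matrix.PosDef.one.add_posSemidef (hN.inv.posSemidef.conjTranspose_mul_mul_same C)
  have hGdet : IsUnit G.det := hGpd.det_pos.ne'.isUnit
  have hkey : N⁻¹ = M⁻¹ + M⁻¹ * (C * (Cᴴ * N⁻¹)) := by
    have h1 : M * N⁻¹ = 1 + C * (Cᴴ * N⁻¹) := by
      rw [hM, Matrix.add_mul, Matrix.mul_nonsing_inv _ hNdet, Matrix.mul_assoc]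
    calc N⁻¹ = M⁻¹ * (M * N⁻¹) := by
          rw [← Matrix.mul_assoc, Matrix.nonsing_inv_mul _ hMdet, Matrix.one_mul]
      _ = M⁻¹ + M⁻¹ * (C * (Cᴴ * N⁻¹)) := by rw [h1, Matrix.mul_add, Matrix.mul_one]
  have hInv : E Γhat * G = 1 := by
    rw [hEhat, hΓ, hG]
    have hts : Cᴴ * (M⁻¹ * C) + Cᴴ * (M⁻¹ * (C * (Cᴴ * (N⁻¹ * C)))) = Cᴴ * (N⁻¹ * C) := by
      conv_rhs => rw [hkey]
      simp [Matrix.add_mul, Matrix.mul_add, Matrix.mul_assoc]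
    have expand : (1 - Cᴴ * (M⁻¹ * C)) * (1 + Cᴴ * N⁻¹ * C)
        = 1 + (Cᴴ * (N⁻¹ * C) - (Cᴴ * (M⁻¹ * C) + Cᴴ * (M⁻¹ * (C * (Cᴴ * (N⁻¹ * C)))))) := by
      simp only [Matrix.sub_mul, Matrix.mul_add, Matrix.add_mul, Matrix.mul_one,
        Matrix.one_mul, Matrix.mul_assoc]
      abel
    rw [expand, sub_eq_zero_of_eq hts.symm, add_zero]
  have hEinv : G⁻¹ = E Γhat := Matrix.inv_eq_left_inv hInv
  have hEpd : (E Γhat).PosDef := hEinv ▸ hGpd.inv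
  have hGE : (E Γhat)⁻¹ = G := by rw [← hEinv, Matrix.nonsing_inv_nonsing_inv _ hGdet]
  have hdet1 : (E Γhat).det * G.det = 1 := by rw [← Matrix.det_mul, hInv, Matrix.det_one]
  -- LHS determinant
  have hLG : ((1 : Matrix (Fin n) (Fin n) ℂ) + A * B * Bᴴ * Aᴴ * N⁻¹).det = G.det := by
    have h1 : A * B * Bᴴ * Aᴴ * N⁻¹ = C * (Cᴴ * N⁻¹) := by
      simp [hC, conjTranspose_mul, Matrix.mul_assoc]
    rw [h1, Matrix.det_one_add_mul_comm, hG, Matrix.mul_assoc]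
  have hre1 : (E Γhat).det.re * G.det.re = 1 := by
    simpa [Complex.mul_re, wmmse_det_im hEpd] using congrArg Complex.re hdet1
  have hlog : Real.log G.det.re = - Real.log (E Γhat).det.re := by
    rw [eq_inv_of_mul_eq_one_left hre1, Real.log_inv, neg_neg]
  have hcard : (Fintype.card (Fin l) : ℝ) = (l : ℝ) := by simp
  constructor
  · intro Γ Ω hΩ
    have hsplit : ((Ω * E Γ).trace).re
        = ((Ω * E Γhat).trace).re + ((Ω * ((Γ - Γhat)ᴴ * M * (Γ - Γhat))).trace).re := by
      rw [hdecomp Γ, Matrix.mul_add, Matrix.trace_add, Complex.add_re]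
    have h2 : 0 ≤ ((Ω * ((Γ - Γhat)ᴴ * M * (Γ - Γhat))).trace).re :=
      wmmse_trace_mul_nonneg hΩ (hMpd.posSemidef.conjTranspose_mul_mul_same _)
    have h3 := wmmse_key_ineq hΩ hEpd
    rw [hcard] at h3
    rw [hLG, hlog]
    linarith
  · rw [hLG, hGE]
    have hGEone : G * E Γhat = 1 := mul_eq_one_comm.mp hInv
    rw [hGEone, Matrix.trace_one]
    simp
end

section
/- For a Hermitian positive definite matrix S ∈ ℂ^{l×l}, the maximum of log det(Ω) − Tr(Ω S) over Hermitian positive definite Ω ∈ ℂ^{l×l} equals −log det(S) − l, attained uniquely at Ω = S⁻¹. -/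
open Matrix
open scoped ComplexOrder

lemma trace_eq_sum_eigs {n : ℕ} {B : Matrix (Fin n) (Fin n) ℂ} (hB : B.IsHermitian) :
    B.trace = ((∑ i, hB.eigenvalues i : ℝ) : ℂ) := by
  conv_lhs => rw [hB.spectral_theorem]
  rw [Unitary.conjStarAlgAut_apply, trace_mul_cycle,
    (Matrix.mem_unitaryGroup_iff').mp hB.eigenvectorUnitary.2, one_mul, trace_diagonal]
  push_cast
  rfl

lemma key_ineq {n : ℕ} {B : Matrix (Fin n) (Fin n) ℂ} (hB : B.PosDef) :
    Real.log B.det.re - B.trace.re ≤ -(n : ℝ) ∧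
    (Real.log B.det.re - B.trace.re = -(n : ℝ) → B = 1) := by
  have hμ : ∀ i, 0 < hB.isHermitian.eigenvalues i := hB.eigenvalues_pos
  have hdet : B.det.re = ∏ i, hB.isHermitian.eigenvalues i := by
    rw [hB.isHermitian.det_eq_prod_eigenvalues]
    norm_cast
  have htr : B.trace.re = ∑ i, hB.isHermitian.eigenvalues i := by
    rw [trace_eq_sum_eigs hB.isHermitian]; exact Complex.ofReal_re _
  have hlog : Real.log B.det.re = ∑ i, Real.log (hB.isHermitian.eigenvalues i) := by
    rw [hdet, Real.log_prod (fun i _ => (hμ i).ne')]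
  have hterm : ∀ i ∈ Finset.univ, Real.log (hB.isHermitian.eigenvalues i) -
      hB.isHermitian.eigenvalues i ≤ -1 := by
    intro i _
    have := Real.log_le_sub_one_of_pos (hμ i)
    linarith
  have hsum : Real.log B.det.re - B.trace.re =
      ∑ i, (Real.log (hB.isHermitian.eigenvalues i) - hB.isHermitian.eigenvalues i) := by
    rw [hlog, htr, Finset.sum_sub_distrib]
  constructor
  · rw [hsum]
    calc _ ≤ ∑ _i : Fin n, (-1 : ℝ) := Finset.sum_le_sum hterm
    _ = -(n : ℝ) := by simp
  · intro heq
    have hall : ∀ i, hB.isHermitian.eigenvalues i = 1 := by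
      by_contra hne
      push_neg at hne
      obtain ⟨j, hj⟩ := hne
      have hstrict : ∑ i, (Real.log (hB.isHermitian.eigenvalues i) -
          hB.isHermitian.eigenvalues i) < ∑ _i : Fin n, (-1 : ℝ) := by
        refine Finset.sum_lt_sum hterm ⟨j, Finset.mem_univ j, ?_⟩
        have := Real.log_lt_sub_one_of_pos (hμ j) hj
        linarith
      rw [← hsum, heq] at hstrict
      simp at hstrict
    rw [hB.isHermitian.spectral_theorem]
    have hD : ((RCLike.ofReal : ℝ → ℂ) ∘ hB.isHermitian.eigenvalues) = fun _ => 1 :=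
      funext fun i => by simp [hall]
    rw [hD, diagonal_one, Unitary.conjStarAlgAut_apply, mul_one,
      (Matrix.mem_unitaryGroup_iff).mp hB.isHermitian.eigenvectorUnitary.2]

lemma posDef_of_posSemidef_det_ne_zero {n : ℕ} {A : Matrix (Fin n) (Fin n) ℂ}
    (h : A.PosSemidef) (hd : A.det ≠ 0) : A.PosDef := by
  classical
  exact h.posDef_iff_det_ne_zero.mpr hd

lemma posdef_conj {n : ℕ} {A R : Matrix (Fin n) (Fin n) ℂ} (hA : A.PosDef)
    (hR : R.PosDef) : (R * A * R).PosDef := by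
  have hRH : Rᴴ = R := hR.isHermitian
  refine posDef_iff_dotProduct_mulVec.mpr ⟨?_, ?_⟩
  · have := isHermitian_conjTranspose_mul_mul R hA.isHermitian
    rwa [hRH] at this
  · intro x hx
    have hRx : R *ᵥ x ≠ 0 := by
      intro h
      have hinj : Function.Injective (R.mulVec) := by
        have : Invertible R := hR.isUnit.invertible
        exact Matrix.mulVec_injective_of_invertible R
      exact hx (hinj (by simpa using h))
    have hrw : R * A * R = Rᴴ * A * R := by rw [hRH]
    rw [hrw]
    simpa only [star_mulVec, dotProduct_mulVec, vecMul_vecMul] using hA.dotProduct_mulVec_pos hRx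

/-- The weight-matrix update: over Hermitian positive definite `Ω`, the function
`Ω ↦ log det Ω − Tr(Ω S)` is maximized uniquely at `Ω = S⁻¹` with value `−log det S − l`. -/
theorem weight_update_optimal (l : ℕ) (S : Matrix (Fin l) (Fin l) ℂ) (hS : S.PosDef) :
    (∀ Ω : Matrix (Fin l) (Fin l) ℂ, Ω.PosDef →
      Real.log (Ω.det.re) - ((Ω * S).trace).re ≤ -Real.log (S.det.re) - (l : ℝ)) ∧
    (S⁻¹).PosDef ∧
    (Real.log ((S⁻¹).det.re) - ((S⁻¹ * S).trace).re = -Real.log (S.det.re) - (l : ℝ)) ∧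
    (∀ Ω : Matrix (Fin l) (Fin l) ℂ, Ω.PosDef →
      Real.log (Ω.det.re) - ((Ω * S).trace).re = -Real.log (S.det.re) - (l : ℝ) →
      Ω = S⁻¹) := by
  classical
  set R := (open scoped MatrixOrder in CFC.sqrt S) with hRdef
  have hRR : R * R = S := by
    open scoped MatrixOrder in
    exact CFC.sqrt_mul_sqrt_self S (nonneg_iff_posSemidef.mpr hS.posSemidef)
  have hSdetne : S.det ≠ 0 := hS.det_pos.ne'
  have hRdet : R.det ≠ 0 := by
    intro h
    apply hSdetne
    rw [← hRR, det_mul, h, zero_mul]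
  have hRposdef : R.PosDef :=
    posDef_of_posSemidef_det_ne_zero (by open scoped MatrixOrder in exact nonneg_iff_posSemidef.mp (CFC.sqrt_nonneg S)) hRdet
  have hSre : 0 < S.det.re := by
    have := hS.det_pos; rw [Complex.lt_def] at this; exact this.1
  have hSim : S.det.im = 0 := by
    have := hS.det_pos; rw [Complex.lt_def] at this; exact this.2.symm
  have main : ∀ Ω : Matrix (Fin l) (Fin l) ℂ, Ω.PosDef →
      Real.log (Ω.det.re) - ((Ω * S).trace).re =
        Real.log ((R * Ω * R).det.re) - ((R * Ω * R).trace).re - Real.log (S.det.re) := by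
    intro Ω hΩ
    have hΩre : 0 < Ω.det.re := by
      have := hΩ.det_pos; rw [Complex.lt_def] at this; exact this.1
    have hΩim : Ω.det.im = 0 := by
      have := hΩ.det_pos; rw [Complex.lt_def] at this; exact this.2.symm
    have htr : (R * Ω * R).trace = (Ω * S).trace := by
      rw [trace_mul_cycle, hRR, trace_mul_comm]
    have hdet : (R * Ω * R).det.re = S.det.re * Ω.det.re := by
      have h1 : (R * Ω * R).det = S.det * Ω.det := by
        rw [det_mul, det_mul, mul_comm R.det Ω.det, mul_assoc, ← det_mul, hRR, mul_comm]
      rw [h1, Complex.mul_re, hΩim, hSim]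
      ring
    rw [htr, hdet, Real.log_mul hSre.ne' hΩre.ne']
    ring
  have upper : ∀ Ω : Matrix (Fin l) (Fin l) ℂ, Ω.PosDef →
      Real.log (Ω.det.re) - ((Ω * S).trace).re ≤ -Real.log (S.det.re) - (l : ℝ) := by
    intro Ω hΩ
    have hA : (R * Ω * R).PosDef := posdef_conj hΩ hRposdef
    have := (key_ineq hA).1
    rw [main Ω hΩ]
    linarith
  have hSinvS : S⁻¹ * S = 1 := nonsing_inv_mul S hSdetne.isUnit
  have hvalue : Real.log ((S⁻¹).det.re) - ((S⁻¹ * S).trace).re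
      = -Real.log (S.det.re) - (l : ℝ) := by
    have h1 : ((S⁻¹ * S).trace).re = (l : ℝ) := by
      rw [hSinvS, trace_one]
      simp
    have hdetS : S.det = ((S.det.re : ℝ) : ℂ) := Complex.ext rfl (by simpa using hSim)
    have h2 : (S⁻¹).det = (((S.det.re)⁻¹ : ℝ) : ℂ) := by
      rw [det_nonsing_inv, Ring.inverse_eq_inv', hdetS]
      norm_num
    rw [h1, h2, Complex.ofReal_re, Real.log_inv]
  refine ⟨upper, hS.inv, hvalue, ?_⟩
  intro Ω hΩ heq
  have hA : (R * Ω * R).PosDef := posdef_conj hΩ hRposdef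
  have hAeq : Real.log ((R * Ω * R).det.re) - ((R * Ω * R).trace).re = -(l : ℝ) := by
    have := main Ω hΩ
    rw [heq] at this
    linarith
  have hone : R * Ω * R = 1 := (key_ineq hA).2 hAeq
  have hRinvl : R⁻¹ * R = 1 := nonsing_inv_mul R hRdet.isUnit
  have hRinvr : R * R⁻¹ = 1 := mul_nonsing_inv R hRdet.isUnit
  have h2 : R⁻¹ * (R * Ω * R) * R⁻¹ = Ω := by
    calc R⁻¹ * (R * Ω * R) * R⁻¹ = (R⁻¹ * R) * Ω * (R * R⁻¹) := by noncomm_ring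
    _ = Ω := by rw [hRinvl, hRinvr, one_mul, mul_one]
  rw [hone] at h2
  rw [mul_one] at h2
  rw [← h2, ← Matrix.mul_inv_rev, hRR]
end

section
/- Let a > 0 and b ∈ ℂ^n, and let p* = −b · min(1/a, √P/‖b‖) for P > 0 (with p* = 0 when b = 0). Then p* satisfies the KKT conditions of minimizing a‖p‖² + 2Re(bᴴp) subject to ‖p‖² ≤ P: there exists μ ≥ 0 with (a + μ)p* = −b and μ(‖p*‖² − P) = 0 and ‖p*‖² ≤ P. -/
open scoped InnerProductSpace

/-- The closed-form per-antenna update satisfies the KKT conditions of the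
ball-constrained quadratic program. -/
theorem papc_update_kkt (n : ℕ) (a P : ℝ) (ha : 0 < a) (hP : 0 < P)
    (b : EuclideanSpace ℂ (Fin n))
    (pstar : EuclideanSpace ℂ (Fin n))
    (hpstar : pstar = (-(min (1 / a) (Real.sqrt P / ‖b‖))) • b) :
    ∃ μ : ℝ, 0 ≤ μ ∧
      ((a + μ : ℝ) : ℂ) • pstar = -b ∧
      μ * (‖pstar‖ ^ 2 - P) = 0 ∧
      ‖pstar‖ ^ 2 ≤ P := by
  have hsP : 0 < Real.sqrt P := Real.sqrt_pos.mpr hP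
  by_cases hb : b = 0
  · exact ⟨0, le_refl _, by simp [hpstar, hb], by simp [hpstar, hb], by
      simp [hpstar, hb]; positivity⟩
  · have hbn : 0 < ‖b‖ := norm_pos_iff.mpr hb
    by_cases hle : 1 / a ≤ Real.sqrt P / ‖b‖
    · have hmin : min (1 / a) (Real.sqrt P / ‖b‖) = 1 / a := min_eq_left hle
      have hnorm : ‖pstar‖ = (1 / a) * ‖b‖ := by
        rw [hpstar, hmin, norm_smul, Real.norm_eq_abs, abs_neg,
          abs_of_pos (by positivity)]
      refine ⟨0, le_refl _, ?_, by ring, ?_⟩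
      · rw [hpstar, hmin, add_zero, ← Complex.coe_smul, smul_smul]
        norm_cast
        rw [show a * -(1 / a) = -1 by field_simp]
        simp
      · have h1 : (1 / a) * ‖b‖ ≤ Real.sqrt P := by
          rw [le_div_iff₀ hbn] at hle
          linarith [hle]
        calc ‖pstar‖ ^ 2 ≤ Real.sqrt P ^ 2 := by
              rw [hnorm]
              exact pow_le_pow_left₀ (by positivity) h1 2
          _ = P := Real.sq_sqrt hP.le
    · have hmin : min (1 / a) (Real.sqrt P / ‖b‖) = Real.sqrt P / ‖b‖ :=
        min_eq_right (le_of_not_ge hle)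
      have hnorm : ‖pstar‖ ^ 2 = P := by
        rw [hpstar, hmin, norm_smul, Real.norm_eq_abs, abs_neg,
          abs_of_pos (by positivity), mul_pow, div_pow, Real.sq_sqrt hP.le]
        field_simp
      refine ⟨‖b‖ / Real.sqrt P - a, ?_, ?_, by rw [hnorm]; ring, hnorm.le⟩
      · have : 1 / a < Real.sqrt P / ‖b‖ → False := fun h => hle h.le
        push_neg at hle
        rw [div_lt_div_iff₀ hbn ha] at hle
        rw [sub_nonneg, le_div_iff₀ hsP]
        nlinarith
      · rw [hpstar, hmin, ← Complex.coe_smul, smul_smul]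
        norm_cast
        rw [show (a + (‖b‖ / Real.sqrt P - a)) * -(Real.sqrt P / ‖b‖) = -1 by
            field_simp; ring]
        simp
end
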